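/- For the Gauss map, the pressure of −log|T′| equals 0: the limit lim_{n→∞} (1/n) log ( Σ_{(i_1,…,i_n)∈ℕ^n} |(T^n)′(z_{i_1…i_n})|^{−1} ) exists and equals 0, where z_{i_1…i_n} = Π((i_1…i_n)^∞) denotes the period-n periodic point of T whose continued fraction expansion is the infinite repetition of (i_1,…,i_n). -/

import Mathlib

open MeasureTheory Filter Set
open scoped ENNReal

instance : MeasurableSpace ℕ+ := ⊤

/-- The Gauss map `T x = 1/x - ⌊1/x⌋` (with `T 0 = 0`). -/
noncomputable def gaussMap (x : ℝ) : ℝ := if x = 0 then 0 else Int.fract x⁻¹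

/-- Finite continued fraction approximants: `cfApprox n a` is the value of the
continued fraction `1/(a 0 + 1/(a 1 + ⋯))` truncated after `n` levels. -/
noncomputable def cfApprox : ℕ → (ℕ → ℕ+) → ℝ
  | 0, _ => 0
  | n + 1, a => (((a 0 : ℕ) : ℝ) + cfApprox n (fun k => a (k + 1)))⁻¹

/-- The continued fraction coding map `Π : ℕ^ℕ → [0,1] ∖ ℚ`. -/
noncomputable def cfVal (a : ℕ → ℕ+) : ℝ := limUnder atTop (fun n => cfApprox n a)

/-- `p` is a countable probability vector `(p_n)_{n ≥ 1}`. -/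
def IsProbVec (p : ℕ+ → ℝ) : Prop := (∀ n, 0 ≤ p n) ∧ HasSum p 1

/-- `m` is the Bernoulli product measure on `ℕ^ℕ` with weights `p`:
it assigns to each cylinder the product of the weights of its digits. -/
def IsBernoulli (p : ℕ+ → ℝ) (m : Measure (ℕ → ℕ+)) : Prop :=
  ∀ (n : ℕ) (i : ℕ → ℕ+),
    m {a | ∀ k < n, a k = i k} = ENNReal.ofReal (∏ k ∈ Finset.range n, p (i k))

/-- Hausdorff dimension of a measure: `inf { dim_H A : μ A = 1 }`. -/
noncomputable def dimMeasure (μ : Measure ℝ) : ℝ≥0∞ :=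
  ⨅ (A : Set ℝ) (_ : μ A = 1), dimH A


/-- The periodic extension `(i_1 … i_n)^∞` of a finite word. -/
def perExt (n : ℕ) (i : Fin n → ℕ+) : ℕ → ℕ+ :=
  if h : 0 < n then fun k => i ⟨k % n, Nat.mod_lt k h⟩ else fun _ => 1

/- ### auxiliary: Möbius data of a word -/

noncomputable def gL : List ℕ+ → ℝ → ℝ
  | [], t => t
  | a :: w, t => (((a : ℕ) : ℝ) + gL w t)⁻¹

@[simp] lemma gL_nil (t : ℝ) : gL [] t = t := rfl
@[simp] lemma gL_cons (a : ℕ+) (w : List ℕ+) (t : ℝ) :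
    gL (a :: w) t = (((a : ℕ) : ℝ) + gL w t)⁻¹ := rfl

def mat : List ℕ+ → ℕ × ℕ × ℕ × ℕ
  | [] => (1, 0, 0, 1)
  | a :: w => ((mat w).2.2.1, (mat w).2.2.2,
      (mat w).1 + a * (mat w).2.2.1, (mat w).2.1 + a * (mat w).2.2.2)

def mA (w : List ℕ+) : ℕ := (mat w).1
def mB (w : List ℕ+) : ℕ := (mat w).2.1
def mC (w : List ℕ+) : ℕ := (mat w).2.2.1
def mD (w : List ℕ+) : ℕ := (mat w).2.2.2

@[simp] lemma mA_nil : mA [] = 1 := rfl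
@[simp] lemma mB_nil : mB [] = 0 := rfl
@[simp] lemma mC_nil : mC [] = 0 := rfl
@[simp] lemma mD_nil : mD [] = 1 := rfl
@[simp] lemma mA_cons (a : ℕ+) (w : List ℕ+) : mA (a :: w) = mC w := rfl
@[simp] lemma mB_cons (a : ℕ+) (w : List ℕ+) : mB (a :: w) = mD w := rfl
@[simp] lemma mC_cons (a : ℕ+) (w : List ℕ+) : mC (a :: w) = mA w + a * mC w := rfl
@[simp] lemma mD_cons (a : ℕ+) (w : List ℕ+) : mD (a :: w) = mB w + a * mD w := rfl

lemma mD_pos (w : List ℕ+) : 0 < mD w := by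
  induction w with
  | nil => simp
  | cons a w ih =>
      simp only [mD_cons]
      have : 0 < (a : ℕ) := a.pos
      positivity

lemma denom_pos (w : List ℕ+) {t : ℝ} (ht : 0 ≤ t) : 0 < (mC w : ℝ) * t + mD w := by
  have h1 : (0:ℝ) < mD w := by exact_mod_cast mD_pos w
  have h2 : (0:ℝ) ≤ (mC w : ℝ) * t := by positivity
  linarith

lemma det_eq (w : List ℕ+) :
    (mA w : ℤ) * mD w - (mB w : ℤ) * mC w = (-1) ^ w.length := by
  induction w with
  | nil => simp
  | cons a w ih =>
      simp only [mA_cons, mB_cons, mC_cons, mD_cons, List.length_cons]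
      push_cast
      ring_nf
      ring_nf at ih
      linear_combination (-1 : ℤ) * ih

lemma gL_nonneg (w : List ℕ+) {t : ℝ} (ht : 0 ≤ t) : 0 ≤ gL w t := by
  induction w with
  | nil => simpa
  | cons a w ih =>
      have h1 : (1:ℝ) ≤ (a : ℕ) := by exact_mod_cast a.one_le
      simp only [gL_cons]
      positivity

lemma gL_le_one (w : List ℕ+) {t : ℝ} (ht : 0 ≤ t) (ht1 : t ≤ 1) : gL w t ≤ 1 := by
  cases w with
  | nil => simpa
  | cons a w =>
      have h1 : (1:ℝ) ≤ (a : ℕ) := by exact_mod_cast a.one_le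
      have h2 : 0 ≤ gL w t := gL_nonneg w ht
      simp only [gL_cons]
      rw [inv_le_one_iff₀]
      right; linarith

lemma gL_eq (w : List ℕ+) {t : ℝ} (ht : 0 ≤ t) :
    gL w t = ((mA w : ℝ) * t + mB w) / ((mC w : ℝ) * t + mD w) := by
  induction w with
  | nil => simp
  | cons a w ih =>
      have hd : 0 < (mC w : ℝ) * t + mD w := denom_pos w ht
      have hg : 0 ≤ gL w t := gL_nonneg w ht
      have h1 : (1:ℝ) ≤ (a : ℕ) := by exact_mod_cast a.one_le
      have hne : ((a : ℕ) : ℝ) + gL w t ≠ 0 := by linarith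
      have hd2 : 0 < (mC (a :: w) : ℝ) * t + mD (a :: w) := denom_pos _ ht
      simp only [gL_cons, mA_cons, mB_cons, mC_cons, mD_cons] at *
      push_cast at hd2 ⊢
      have key : ((a : ℕ) : ℝ) + gL w t
          = (((mA w : ℝ) + (a:ℕ) * mC w) * t + ((mB w : ℝ) + (a:ℕ) * mD w))
            / ((mC w : ℝ) * t + mD w) := by
        rw [ih]
        rw [eq_div_iff hd.ne', add_mul, div_mul_cancel₀ _ hd.ne']
        ring
      rw [key, inv_div]

lemma gL_diff (w : List ℕ+) {s t : ℝ} (hs : 0 ≤ s) (ht : 0 ≤ t) :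
    gL w s - gL w t = (-1 : ℝ) ^ w.length * (s - t)
      / (((mC w : ℝ) * s + mD w) * ((mC w : ℝ) * t + mD w)) := by
  have hds : 0 < (mC w : ℝ) * s + mD w := denom_pos w hs
  have hdt : 0 < (mC w : ℝ) * t + mD w := denom_pos w ht
  have hdet : (mA w : ℝ) * mD w - (mB w : ℝ) * mC w = (-1) ^ w.length := by
    exact_mod_cast congrArg (fun z : ℤ => (z : ℝ)) (det_eq w)
  rw [gL_eq w hs, gL_eq w ht, div_sub_div _ _ (ne_of_gt hds) (ne_of_gt hdt)]
  rw [div_eq_div_iff (by positivity) (by positivity)]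
  ring_nf
  linear_combination (s - t) * ((mC w : ℝ) * s + mD w) * ((mC w : ℝ) * t + mD w) * hdet

lemma mD_ge (w : List ℕ+) :
    2 ^ (w.length / 2) ≤ mD w ∧ 2 ^ ((w.length + 1) / 2) ≤ mB w + mD w := by
  induction w with
  | nil => simp
  | cons a w ih =>
      obtain ⟨h1, h2⟩ := ih
      have ha : 1 ≤ (a : ℕ) := a.one_le
      have hDD : mD w ≤ (a : ℕ) * mD w := Nat.le_mul_of_pos_left _ a.pos
      constructor
      · simp only [mD_cons, List.length_cons]
        calc 2 ^ ((w.length + 1) / 2) ≤ mB w + mD w := h2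
        _ ≤ mB w + (a:ℕ) * mD w := by omega
      · simp only [mB_cons, mD_cons, List.length_cons]
        have hmono : (2:ℕ) ^ (w.length / 2) ≤ 2 ^ ((w.length + 1) / 2) :=
          Nat.pow_le_pow_right (by norm_num) (by omega)
        have : (2:ℕ) ^ ((w.length + 1 + 1) / 2) = 2 ^ (w.length / 2) * 2 := by
          rw [← pow_succ]
          congr 1
          omega
        omega

lemma mD_sq_ge (w : List ℕ+) : (2:ℝ) ^ w.length ≤ 2 * (mD w : ℝ) ^ 2 := by
  have h := (mD_ge w).1
  have h2 : (2:ℝ) ^ (w.length / 2) ≤ (mD w : ℝ) := by exact_mod_cast h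
  have h3 : (2:ℝ) ^ (w.length / 2) > 0 := by positivity
  have h4 : ((2:ℝ) ^ (w.length / 2)) ^ 2 ≤ (mD w : ℝ) ^ 2 := by
    apply pow_le_pow_left₀ (le_of_lt h3) h2
  have h5 : ((2:ℝ) ^ (w.length / 2)) ^ 2 = 2 ^ (w.length / 2 * 2) := by
    rw [← pow_mul]
  have h6 : (2:ℝ) ^ w.length ≤ 2 * 2 ^ (w.length / 2 * 2) := by
    have : w.length ≤ w.length / 2 * 2 + 1 := by omega
    calc (2:ℝ) ^ w.length ≤ 2 ^ (w.length / 2 * 2 + 1) :=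
          pow_le_pow_right₀ (by norm_num) this
    _ = 2 * 2 ^ (w.length / 2 * 2) := by rw [pow_succ]; ring
  nlinarith

lemma gL_lip (w : List ℕ+) {s t : ℝ} (hs : 0 ≤ s) (ht : 0 ≤ t) :
    |gL w s - gL w t| ≤ 2 * (2:ℝ)⁻¹ ^ w.length * |s - t| := by
  have hds : 0 < (mC w : ℝ) * s + mD w := denom_pos w hs
  have hdt : 0 < (mC w : ℝ) * t + mD w := denom_pos w ht
  have hD : (0:ℝ) < mD w := by exact_mod_cast mD_pos w
  have hDs : (mD w : ℝ) ≤ (mC w : ℝ) * s + mD w := by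
    have : (0:ℝ) ≤ (mC w : ℝ) * s := by positivity
    linarith
  have hDt : (mD w : ℝ) ≤ (mC w : ℝ) * t + mD w := by
    have : (0:ℝ) ≤ (mC w : ℝ) * t := by positivity
    linarith
  rw [gL_diff w hs ht, abs_div, abs_mul, abs_pow, abs_neg, abs_one, one_pow, one_mul]
  rw [div_le_iff₀ (by positivity)]
  have hsq : (mD w : ℝ)^2 ≤ ((mC w : ℝ) * s + mD w) * ((mC w : ℝ) * t + mD w) := by
    nlinarith
  have hpow : (2:ℝ) ^ w.length ≤ 2 * (mD w : ℝ) ^ 2 := mD_sq_ge w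
  have habs : |((mC w : ℝ) * s + mD w) * ((mC w : ℝ) * t + mD w)|
      = ((mC w : ℝ) * s + mD w) * ((mC w : ℝ) * t + mD w) := abs_of_pos (by positivity)
  rw [habs]
  have key : 1 ≤ 2 * (2:ℝ)⁻¹ ^ w.length * (((mC w : ℝ) * s + mD w) * ((mC w : ℝ) * t + mD w)) := by
    have h2 : (2:ℝ)⁻¹ ^ w.length = ((2:ℝ) ^ w.length)⁻¹ := by rw [inv_pow]
    rw [h2, mul_comm (2:ℝ) (((2:ℝ)^w.length)⁻¹), mul_assoc, inv_mul_eq_div,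
      le_div_iff₀ (by positivity), one_mul]
    nlinarith
  calc |s - t| = 1 * |s - t| := (one_mul _).symm
  _ ≤ (2 * (2:ℝ)⁻¹ ^ w.length * (((mC w : ℝ) * s + mD w) * ((mC w : ℝ) * t + mD w))) * |s - t| := by
        apply mul_le_mul_of_nonneg_right key (abs_nonneg _)
  _ = 2 * (2:ℝ)⁻¹ ^ w.length * |s - t| * (((mC w : ℝ) * s + mD w) * ((mC w : ℝ) * t + mD w)) := by
        ring

lemma gL_append (v w : List ℕ+) (t : ℝ) : gL (v ++ w) t = gL v (gL w t) := by
  induction v with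
  | nil => simp
  | cons a v ih => simp [ih]

lemma cfApprox_eq (n : ℕ) (a : ℕ → ℕ+) :
    cfApprox n a = gL (List.ofFn fun k : Fin n => a k) 0 := by
  induction n generalizing a with
  | zero => simp [cfApprox]
  | succ n ih =>
      rw [List.ofFn_succ]
      simp only [cfApprox, gL_cons, Fin.val_zero, Fin.val_succ]
      rw [ih (fun k => a (k + 1))]

lemma cfApprox_nonneg (n : ℕ) (a : ℕ → ℕ+) : 0 ≤ cfApprox n a := by
  rw [cfApprox_eq]; exact gL_nonneg _ le_rfl

lemma cfApprox_le_one (n : ℕ) (a : ℕ → ℕ+) : cfApprox n a ≤ 1 := by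
  rw [cfApprox_eq]; exact gL_le_one _ le_rfl zero_le_one

lemma cfApprox_cauchy (a : ℕ → ℕ+) : CauchySeq (fun n => cfApprox n a) := by
  apply cauchySeq_of_le_geometric (2:ℝ)⁻¹ 2 (by norm_num)
  intro n
  rw [Real.dist_eq, cfApprox_eq n a, cfApprox_eq (n + 1) a]
  have hsucc : (List.ofFn fun k : Fin (n+1) => a k)
      = (List.ofFn fun k : Fin n => a k) ++ [a n] := by
    rw [List.ofFn_succ']
    simp [List.concat_eq_append, Fin.coe_castSucc, Fin.val_last]
  rw [hsucc, gL_append]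
  have hb : (0:ℝ) ≤ gL [a n] 0 := gL_nonneg _ le_rfl
  have hb1 : gL [a n] 0 ≤ 1 := gL_le_one _ le_rfl zero_le_one
  have := gL_lip (List.ofFn fun k : Fin n => a k) (le_refl (0:ℝ)) hb
  rw [List.length_ofFn] at this
  calc |gL (List.ofFn fun k : Fin n => a k) 0
        - gL (List.ofFn fun k : Fin n => a k) (gL [a n] 0)|
      ≤ 2 * (2:ℝ)⁻¹ ^ n * |0 - gL [a n] 0| := this
  _ ≤ 2 * (2:ℝ)⁻¹ ^ n * 1 := by
        apply mul_le_mul_of_nonneg_left _ (by positivity)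
        rw [zero_sub, abs_neg, abs_of_nonneg hb]; exact hb1
  _ = 2 * (2:ℝ)⁻¹ ^ n := mul_one _

lemma cfVal_tendsto (a : ℕ → ℕ+) :
    Tendsto (fun n => cfApprox n a) atTop (nhds (cfVal a)) :=
  (cfApprox_cauchy a).tendsto_limUnder

lemma cfVal_nonneg (a : ℕ → ℕ+) : 0 ≤ cfVal a :=
  ge_of_tendsto (cfVal_tendsto a) (Eventually.of_forall fun n => cfApprox_nonneg n a)

lemma cfVal_rec (a : ℕ → ℕ+) :
    cfVal a = (((a 0 : ℕ) : ℝ) + cfVal (fun k => a (k + 1)))⁻¹ := by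
  have h1 : Tendsto (fun n => cfApprox (n + 1) a) atTop (nhds (cfVal a)) :=
    (cfVal_tendsto a).comp (tendsto_add_atTop_nat 1)
  have hne : ((a 0 : ℕ) : ℝ) + cfVal (fun k => a (k + 1)) ≠ 0 := by
    have := cfVal_nonneg (fun k => a (k + 1))
    have h1 : (1:ℝ) ≤ ((a 0 : ℕ) : ℝ) := by exact_mod_cast (a 0).one_le
    positivity
  have h2 : Tendsto (fun n => (((a 0 : ℕ) : ℝ) + cfApprox n (fun k => a (k + 1)))⁻¹)
      atTop (nhds ((((a 0 : ℕ) : ℝ) + cfVal (fun k => a (k + 1)))⁻¹)) :=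
    ((cfVal_tendsto (fun k => a (k + 1))).const_add _).inv₀ hne
  exact tendsto_nhds_unique h1 h2

lemma cfVal_pos (a : ℕ → ℕ+) : 0 < cfVal a := by
  rw [cfVal_rec a]
  have := cfVal_nonneg (fun k => a (k + 1))
  have h1 : (1:ℝ) ≤ ((a 0 : ℕ) : ℝ) := by exact_mod_cast (a 0).one_le
  positivity

lemma cfVal_lt_one (a : ℕ → ℕ+) : cfVal a < 1 := by
  rw [cfVal_rec a]
  have h0 := cfVal_pos (fun k => a (k + 1))
  have h1 : (1:ℝ) ≤ ((a 0 : ℕ) : ℝ) := by exact_mod_cast (a 0).one_le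
  rw [inv_lt_one_iff₀]
  right; linarith

lemma gauss_cfVal (a : ℕ → ℕ+) : gaussMap (cfVal a) = cfVal (fun k => a (k + 1)) := by
  have hz : cfVal a ≠ 0 := ne_of_gt (cfVal_pos a)
  have hw0 : 0 ≤ cfVal (fun k => a (k + 1)) := cfVal_nonneg _
  have hw1 : cfVal (fun k => a (k + 1)) < 1 := cfVal_lt_one _
  rw [gaussMap, if_neg hz]
  have hinv : (cfVal a)⁻¹ = ((a 0 : ℕ) : ℝ) + cfVal (fun k => a (k + 1)) := by
    rw [cfVal_rec a, inv_inv]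
  rw [hinv, add_comm, Int.fract_add_natCast, Int.fract_eq_self.mpr ⟨hw0, hw1⟩]

lemma gauss_iter (k : ℕ) (a : ℕ → ℕ+) :
    gaussMap^[k] (cfVal a) = cfVal (fun j => a (j + k)) := by
  induction k generalizing a with
  | zero => simp
  | succ k ih =>
      rw [Function.iterate_succ_apply, gauss_cfVal a, ih (fun j => a (j + 1))]
      rfl

def lcons : List ℕ+ → (ℕ → ℕ+) → ℕ → ℕ+
  | [], b => b
  | a :: w, b => fun k => Nat.casesOn k a (lcons w b)

@[simp] lemma lcons_nil (b : ℕ → ℕ+) : lcons [] b = b := rfl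
@[simp] lemma lcons_cons_zero (a : ℕ+) (w : List ℕ+) (b : ℕ → ℕ+) :
    lcons (a :: w) b 0 = a := rfl
@[simp] lemma lcons_cons_succ (a : ℕ+) (w : List ℕ+) (b : ℕ → ℕ+) (k : ℕ) :
    lcons (a :: w) b (k + 1) = lcons w b k := rfl

lemma cfVal_lcons (w : List ℕ+) (b : ℕ → ℕ+) :
    cfVal (lcons w b) = gL w (cfVal b) := by
  induction w with
  | nil => simp
  | cons a w ih =>
      rw [cfVal_rec (lcons (a :: w) b)]
      simp only [lcons_cons_zero, lcons_cons_succ, gL_cons]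
      rw [ih]

lemma prod_cfVal (w : List ℕ+) (b : ℕ → ℕ+) :
    ∏ k ∈ Finset.range w.length, cfVal (fun j => lcons w b (j + k))
      = ((mC w : ℝ) * cfVal b + mD w)⁻¹ := by
  induction w with
  | nil => simp
  | cons a w ih =>
      have hz : 0 ≤ cfVal b := cfVal_nonneg b
      have hd : 0 < (mC w : ℝ) * cfVal b + mD w := denom_pos w hz
      have hd2 : 0 < (mC (a :: w) : ℝ) * cfVal b + mD (a :: w) := denom_pos _ hz
      have hg : 0 ≤ gL w (cfVal b) := gL_nonneg w hz
      have h1 : (1:ℝ) ≤ ((a : ℕ) : ℝ) := by exact_mod_cast a.one_le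
      rw [List.length_cons, Finset.prod_range_succ']
      have hshift : ∀ x : ℕ, (fun j => lcons (a :: w) b (j + (x + 1)))
          = (fun j => lcons w b (j + x)) := by
        intro x; funext j
        have : j + (x + 1) = (j + x) + 1 := by omega
        rw [this, lcons_cons_succ]
      have hre : ∀ x ∈ Finset.range w.length,
          cfVal (fun j => lcons (a :: w) b (j + (x + 1)))
            = cfVal (fun j => lcons w b (j + x)) := by
        intro x _; rw [hshift x]
      rw [Finset.prod_congr rfl hre, ih]
      have hf0 : (fun j => lcons (a :: w) b (j + 0)) = lcons (a :: w) b := by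
        funext j; simp
      rw [hf0, cfVal_lcons, gL_cons, gL_eq w hz]
      simp only [mC_cons, mD_cons]
      push_cast
      rw [← mul_inv]
      congr 1
      field_simp
      ring

lemma lcons_add_length (w : List ℕ+) (b : ℕ → ℕ+) (j : ℕ) :
    lcons w b (w.length + j) = b j := by
  induction w with
  | nil => simp
  | cons a w ih =>
      have : (a :: w).length + j = (w.length + j) + 1 := by
        simp [List.length_cons]; omega
      rw [this, lcons_cons_succ, ih]

lemma lcons_ofFn_lt {n : ℕ} (i : Fin n → ℕ+) (b : ℕ → ℕ+) (k : ℕ) (h : k < n) :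
    lcons (List.ofFn i) b k = i ⟨k, h⟩ := by
  induction n generalizing k with
  | zero => omega
  | succ n ih =>
      rw [List.ofFn_succ]
      cases k with
      | zero => simp
      | succ k =>
          rw [lcons_cons_succ, ih (fun j => i j.succ) k (by omega)]
          congr 1

lemma perExt_fix {n : ℕ} (hn : 0 < n) (i : Fin n → ℕ+) :
    lcons (List.ofFn i) (perExt n i) = perExt n i := by
  funext k
  by_cases h : k < n
  · rw [lcons_ofFn_lt i _ k h]
    rw [perExt, dif_pos hn]
    congr 1
    exact (Fin.ext (by simp [Nat.mod_eq_of_lt h])).symm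
  · push_neg at h
    have hk : k = (List.ofFn i).length + (k - n) := by
      rw [List.length_ofFn]; omega
    rw [hk, lcons_add_length]
    rw [perExt, dif_pos hn]
    congr 1
    apply Fin.ext
    simp only [List.length_ofFn]
    rw [Nat.add_mod_left]

lemma term_eq {n : ℕ} (hn : 0 < n) (i : Fin n → ℕ+) :
    ∏ k ∈ Finset.range n, (gaussMap^[k] (cfVal (perExt n i))) ^ 2
      = ((((mC (List.ofFn i) : ℝ) * cfVal (perExt n i) + mD (List.ofFn i))) ^ 2)⁻¹ := by
  have h1 : ∀ k ∈ Finset.range n,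
      (gaussMap^[k] (cfVal (perExt n i))) ^ 2
        = (cfVal (fun j => lcons (List.ofFn i) (perExt n i) (j + k))) ^ 2 := by
    intro k _
    rw [gauss_iter k (perExt n i)]
    rw [perExt_fix hn i]
  rw [Finset.prod_congr rfl h1, Finset.prod_pow]
  have h3 := prod_cfVal (List.ofFn i) (perExt n i)
  rw [List.length_ofFn] at h3
  rw [h3, inv_pow]

noncomputable def Lr (w : List ℕ+) : ℝ := ((mD w : ℝ) * ((mC w : ℝ) + mD w))⁻¹

lemma Lr_nonneg (w : List ℕ+) : 0 ≤ Lr w := by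
  unfold Lr; positivity

lemma Lr_pos (w : List ℕ+) : 0 < Lr w := by
  have h1 : (0:ℝ) < mD w := by exact_mod_cast mD_pos w
  have h2 : (0:ℝ) ≤ mC w := by positivity
  unfold Lr; positivity

lemma mCD_le (w : List ℕ+) (h : w ≠ []) : mC w ≤ mD w ∧ mA w ≤ mB w := by
  induction w with
  | nil => exact absurd rfl h
  | cons a w ih =>
      have ha : 1 ≤ (a : ℕ) := a.one_le
      by_cases hw : w = []
      · subst hw
        refine ⟨?_, ?_⟩ <;> simp [ha]
      · obtain ⟨h1, h2⟩ := ih hw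
        constructor
        · simp only [mC_cons, mD_cons]
          have : (a:ℕ) * mC w ≤ (a:ℕ) * mD w := Nat.mul_le_mul_left _ h1
          omega
        · simpa using h1

lemma Lr_eq (w : List ℕ+) : Lr w = (-1 : ℝ) ^ w.length * (gL w 1 - gL w 0) := by
  have h := gL_diff w (zero_le_one) (le_refl (0:ℝ))
  rw [h]
  have he : (-1 : ℝ) ^ w.length * (-1 : ℝ) ^ w.length = 1 := by
    rw [← pow_add]
    exact (neg_one_pow_eq_one_iff_even (by norm_num)).mpr (Even.add_self _)
  rw [mul_div_assoc', ← mul_assoc, he, one_mul]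
  unfold Lr
  rw [sub_zero, mul_zero, zero_add, mul_one, one_div, mul_comm ((mC w : ℝ) + mD w)]

lemma hasSum_Lr (w : List ℕ+) : HasSum (fun p : ℕ+ => Lr (w ++ [p])) (Lr w) := by
  classical
  set n := w.length with hn
  -- auxiliary sequence
  set h : ℕ → ℝ := fun N => (-1 : ℝ) ^ n * (gL w (((N : ℝ) + 1)⁻¹) - gL w 0) with hh
  have hinv_nonneg : ∀ N : ℕ, (0:ℝ) ≤ ((N : ℝ) + 1)⁻¹ := by
    intro N; positivity
  have h_formula : ∀ N : ℕ, h N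
      = ((N : ℝ) + 1)⁻¹ / (((mC w : ℝ) * ((N : ℝ) + 1)⁻¹ + mD w) * (mD w : ℝ)) := by
    intro N
    have := gL_diff w (hinv_nonneg N) (le_refl (0:ℝ))
    rw [hh]
    simp only []
    rw [this]
    have he : (-1 : ℝ) ^ n * (-1 : ℝ) ^ n = 1 := by
      rw [← pow_add]
      exact (neg_one_pow_eq_one_iff_even (by norm_num)).mpr (Even.add_self _)
    rw [mul_div_assoc', ← mul_assoc, hn, he, one_mul, sub_zero, mul_zero, zero_add]
  have h_nonneg : ∀ N, 0 ≤ h N := by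
    intro N
    rw [h_formula N]
    have h1 : (0:ℝ) < mD w := by exact_mod_cast mD_pos w
    have h2 : 0 < (mC w : ℝ) * ((N : ℝ) + 1)⁻¹ + mD w := denom_pos w (hinv_nonneg N)
    positivity
  have h_le : ∀ N : ℕ, h N ≤ ((N : ℝ) + 1)⁻¹ := by
    intro N
    rw [h_formula N]
    have h1 : (1:ℝ) ≤ mD w := by exact_mod_cast mD_pos w
    have h2 : (mD w : ℝ) ≤ (mC w : ℝ) * ((N : ℝ) + 1)⁻¹ + mD w := by
      have : (0:ℝ) ≤ (mC w : ℝ) * ((N : ℝ) + 1)⁻¹ := by positivity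
      linarith
    have h3 : (1:ℝ) ≤ ((mC w : ℝ) * ((N : ℝ) + 1)⁻¹ + mD w) * (mD w : ℝ) := by
      nlinarith
    rw [div_le_iff₀ (by linarith)]
    nlinarith [hinv_nonneg N]
  have h_zero : h 0 = Lr w := by
    rw [hh, Lr_eq w]
    norm_num
    exact Or.inl rfl
  have h_tendsto : Tendsto h atTop (nhds 0) := by
    apply squeeze_zero h_nonneg h_le
    have := tendsto_one_div_add_atTop_nhds_zero_nat (𝕜 := ℝ)
    simpa [one_div] using this
  -- the terms
  have step : ∀ N : ℕ, Lr (w ++ [Nat.succPNat N]) = h N - h (N + 1) := by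
    intro N
    rw [Lr_eq]
    have hlen : (w ++ [Nat.succPNat N]).length = n + 1 := by
      simp [hn]
    rw [hlen]
    have hcast : ((Nat.succPNat N : ℕ) : ℝ) = (N : ℝ) + 1 := by
      rw [Nat.succPNat_coe]; push_cast; ring
    have hg1 : gL (w ++ [Nat.succPNat N]) 1 = gL w (((N : ℝ) + 1 + 1)⁻¹) := by
      rw [gL_append]
      congr 1
      rw [gL_cons, gL_nil, hcast]
    have hg0 : gL (w ++ [Nat.succPNat N]) 0 = gL w (((N : ℝ) + 1)⁻¹) := by
      rw [gL_append]
      congr 1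
      rw [gL_cons, gL_nil, hcast, add_zero]
    rw [hg1, hg0, hh]
    simp only []
    push_cast
    ring
  have partial_sum : ∀ M : ℕ,
      ∑ N ∈ Finset.range M, Lr (w ++ [Nat.succPNat N]) = h 0 - h M := by
    intro M
    have : ∀ N, Lr (w ++ [Nat.succPNat N]) = h N - h (N + 1) := step
    rw [Finset.sum_congr rfl (fun N _ => this N)]
    exact Finset.sum_range_sub' h M
  have hs_nat : HasSum (fun N : ℕ => Lr (w ++ [Nat.succPNat N])) (Lr w) := by
    rw [hasSum_iff_tendsto_nat_of_nonneg (fun N => Lr_nonneg _)]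
    have h1 : Tendsto (fun M : ℕ => h 0 - h M) atTop (nhds (h 0 - 0)) :=
      (tendsto_const_nhds).sub h_tendsto
    have h2 : Tendsto (fun M : ℕ => ∑ N ∈ Finset.range M, Lr (w ++ [Nat.succPNat N]))
        atTop (nhds (h 0 - 0)) :=
      h1.congr (fun M => (partial_sum M).symm)
    rw [sub_zero, h_zero] at h2
    exact h2
  exact (Equiv.pnatEquivNat.symm.hasSum_iff
    (f := fun p : ℕ+ => Lr (w ++ [p])) (a := Lr w)).mp hs_nat

noncomputable def LE' (w : List ℕ+) : ℝ≥0∞ := ENNReal.ofReal (Lr w)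

lemma tsum_LE' (w : List ℕ+) : ∑' p : ℕ+, LE' (w ++ [p]) = LE' w := by
  have h := hasSum_Lr w
  have hsumm : Summable (fun p : ℕ+ => Lr (w ++ [p])) := h.summable
  have := ENNReal.ofReal_tsum_of_nonneg (fun p : ℕ+ => Lr_nonneg (w ++ [p])) hsumm
  rw [h.tsum_eq] at this
  exact this.symm

lemma ofFn_snoc {n : ℕ} (j : Fin n → ℕ+) (p : ℕ+) :
    List.ofFn (Fin.snoc j p : Fin (n + 1) → ℕ+) = List.ofFn j ++ [p] := by
  rw [List.ofFn_succ']
  rw [List.concat_eq_append]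
  congr 1
  · congr 1
    funext k
    simp
  · simp

lemma partition (n : ℕ) (hn : 1 ≤ n) :
    ∑' i : Fin n → ℕ+, LE' (List.ofFn i) = 1 := by
  induction n, hn using Nat.le_induction with
  | base =>
      rw [← ((Equiv.funUnique (Fin 1) ℕ+).symm).tsum_eq (fun i => LE' (List.ofFn i))]
      have : ∀ p : ℕ+, LE' (List.ofFn ((Equiv.funUnique (Fin 1) ℕ+).symm p)) = LE' ([] ++ [p]) := by
        intro p
        congr 1
      rw [tsum_congr this, tsum_LE' []]
      unfold LE' Lr
      norm_num
  | succ n hn ih =>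
      rw [← (Fin.snocEquiv (fun _ : Fin (n + 1) => ℕ+)).tsum_eq (fun i => LE' (List.ofFn i))]
      have h1 : ∀ q : ℕ+ × (Fin n → ℕ+),
          LE' (List.ofFn (Fin.snocEquiv (fun _ : Fin (n + 1) => ℕ+) q))
            = LE' (List.ofFn q.2 ++ [q.1]) := by
        intro q
        congr 1
        have he : Fin.snocEquiv (fun _ : Fin (n + 1) => ℕ+) q = Fin.snoc q.2 q.1 := by
          funext k
          simp [Fin.snocEquiv]
        rw [he, ofFn_snoc]
      rw [tsum_congr h1, ENNReal.tsum_prod']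
      have h2 : ∀ p : ℕ+, ∑' j : Fin n → ℕ+, LE' (List.ofFn j ++ [p])
          = ∑' j : Fin n → ℕ+, LE' (List.ofFn j ++ [p]) := fun _ => rfl
      rw [ENNReal.tsum_comm]
      have h3 : ∀ j : Fin n → ℕ+, ∑' p : ℕ+, LE' (List.ofFn j ++ [p]) = LE' (List.ofFn j) :=
        fun j => tsum_LE' (List.ofFn j)
      rw [tsum_congr h3, ih]

lemma term_bounds {n : ℕ} (hn : 0 < n) (i : Fin n → ℕ+) :
    (∏ k ∈ Finset.range n, (gaussMap^[k] (cfVal (perExt n i))) ^ 2) ≤ 2 * Lr (List.ofFn i)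
    ∧ Lr (List.ofFn i) ≤ 2 * ∏ k ∈ Finset.range n, (gaussMap^[k] (cfVal (perExt n i))) ^ 2 := by
  rw [term_eq hn i]
  set w := List.ofFn i with hw
  set z := cfVal (perExt n i) with hzdef
  have hwne : w ≠ [] := by
    intro h
    have : w.length = 0 := by rw [h]; rfl
    rw [hw, List.length_ofFn] at this
    omega
  have hCD : (mC w : ℝ) ≤ (mD w : ℝ) := by exact_mod_cast (mCD_le w hwne).1
  have hD : (1:ℝ) ≤ (mD w : ℝ) := by exact_mod_cast mD_pos w
  have hC : (0:ℝ) ≤ (mC w : ℝ) := by positivity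
  have hz0 : 0 ≤ z := cfVal_nonneg _
  have hz1 : z ≤ 1 := le_of_lt (cfVal_lt_one _)
  have hE1 : (mD w : ℝ) ≤ (mC w : ℝ) * z + mD w := by nlinarith
  have hE2 : (mC w : ℝ) * z + mD w ≤ (mC w : ℝ) + mD w := by nlinarith
  have hEpos : (0:ℝ) < (mC w : ℝ) * z + mD w := by linarith
  unfold Lr
  constructor
  · rw [inv_eq_one_div, inv_eq_one_div, mul_one_div,
      div_le_div_iff₀ (by positivity) (by positivity)]
    nlinarith
  · rw [inv_eq_one_div, inv_eq_one_div, mul_one_div,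
      div_le_div_iff₀ (by positivity) (by positivity)]
    nlinarith

lemma main_bounds (n : ℕ) (hn : 1 ≤ n) :
    2⁻¹ ≤ (∑' i : Fin n → ℕ+, ∏ k ∈ Finset.range n, (gaussMap^[k] (cfVal (perExt n i))) ^ 2)
    ∧ (∑' i : Fin n → ℕ+, ∏ k ∈ Finset.range n, (gaussMap^[k] (cfVal (perExt n i))) ^ 2) ≤ 2 := by
  set f : (Fin n → ℕ+) → ℝ :=
    fun i => ∏ k ∈ Finset.range n, (gaussMap^[k] (cfVal (perExt n i))) ^ 2 with hf
  have hpos : ∀ i, 0 ≤ f i := by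
    intro i
    apply Finset.prod_nonneg
    intro k _
    positivity
  have hub : ∀ i, f i ≤ 2 * Lr (List.ofFn i) := fun i => (term_bounds hn i).1
  have hlb : ∀ i, Lr (List.ofFn i) ≤ 2 * f i := fun i => (term_bounds hn i).2
  set T : ℝ≥0∞ := ∑' i : Fin n → ℕ+, ENNReal.ofReal (f i) with hT
  have hT_ub : T ≤ 2 := by
    calc T ≤ ∑' i : Fin n → ℕ+, ENNReal.ofReal (2 * Lr (List.ofFn i)) :=
          ENNReal.tsum_le_tsum (fun i => ENNReal.ofReal_le_ofReal (hub i))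
    _ = ∑' i : Fin n → ℕ+, 2 * LE' (List.ofFn i) := by
          apply tsum_congr
          intro i
          rw [ENNReal.ofReal_mul (by norm_num)]
          congr 1
          norm_num
    _ = 2 * ∑' i : Fin n → ℕ+, LE' (List.ofFn i) := ENNReal.tsum_mul_left
    _ = 2 := by rw [partition n hn, mul_one]
  have hT_lb : 2⁻¹ ≤ T := by
    have h1 : (1:ℝ≥0∞) ≤ 2 * T := by
      calc (1:ℝ≥0∞) = ∑' i : Fin n → ℕ+, LE' (List.ofFn i) := (partition n hn).symm
      _ ≤ ∑' i : Fin n → ℕ+, 2 * ENNReal.ofReal (f i) := by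
            apply ENNReal.tsum_le_tsum
            intro i
            have := ENNReal.ofReal_le_ofReal (hlb i)
            rw [ENNReal.ofReal_mul (by norm_num)] at this
            calc LE' (List.ofFn i) ≤ ENNReal.ofReal 2 * ENNReal.ofReal (f i) := this
            _ = 2 * ENNReal.ofReal (f i) := by norm_num
      _ = 2 * T := ENNReal.tsum_mul_left
    calc (2:ℝ≥0∞)⁻¹ = 2⁻¹ * 1 := (mul_one _).symm
    _ ≤ 2⁻¹ * (2 * T) := mul_le_mul_right h1 _
    _ = T := by
        rw [← mul_assoc, ENNReal.inv_mul_cancel (by norm_num) (by norm_num), one_mul]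
  have hsumm : Summable f := by
    have hne : (∑' i : Fin n → ℕ+, ((f i).toNNReal : ℝ≥0∞)) ≠ ⊤ := by
      have : (∑' i : Fin n → ℕ+, ((f i).toNNReal : ℝ≥0∞)) = T := by
        apply tsum_congr
        intro i
        rfl
      rw [this]
      exact ne_top_of_le_ne_top (by norm_num) hT_ub
    have h2 : Summable (fun i => (f i).toNNReal) := ENNReal.tsum_coe_ne_top_iff_summable.mp hne
    have h3 : Summable (fun i => ((f i).toNNReal : ℝ)) := NNReal.summable_coe.mpr h2
    apply h3.congr
    intro i
    exact Real.coe_toNNReal _ (hpos i)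
  have hofReal : ENNReal.ofReal (∑' i, f i) = T :=
    ENNReal.ofReal_tsum_of_nonneg hpos hsumm
  have hS_nonneg : 0 ≤ ∑' i, f i := tsum_nonneg hpos
  constructor
  · have h1 : ENNReal.ofReal (2⁻¹:ℝ) ≤ ENNReal.ofReal (∑' i, f i) := by
      rw [hofReal]
      calc ENNReal.ofReal (2⁻¹:ℝ) = 2⁻¹ := by
            rw [ENNReal.ofReal_inv_of_pos (by norm_num)]
            norm_num
      _ ≤ T := hT_lb
    exact (ENNReal.ofReal_le_ofReal_iff hS_nonneg).mp h1
  · have h1 : ENNReal.ofReal (∑' i, f i) ≤ ENNReal.ofReal (2:ℝ) := by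
      rw [hofReal]
      calc T ≤ 2 := hT_ub
      _ = ENNReal.ofReal (2:ℝ) := by norm_num
    exact (ENNReal.ofReal_le_ofReal_iff (by norm_num)).mp h1

/-- **`P(-log |T'|) = 0` for the Gauss map**: the limit
`lim_n (1/n) log ∑_{(i_1,…,i_n) ∈ ℕ^n} |(T^n)'(z_{i_1…i_n})|⁻¹` exists and equals `0`,
where `z_{i_1…i_n} = Π((i_1…i_n)^∞)` and
`|(T^n)'(z)|⁻¹ = ∏_{k<n} |T'(T^k z)|⁻¹ = ∏_{k<n} (T^k z)²`. -/
theorem pressure_neg_log_deriv_eq_zero :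
    Filter.Tendsto (fun n : ℕ =>
      ((n : ℝ))⁻¹ * Real.log (∑' i : Fin n → ℕ+,
        ∏ k ∈ Finset.range n, (gaussMap^[k] (cfVal (perExt n i))) ^ 2))
      Filter.atTop (nhds 0) := by
  have hb : ∀ᶠ n : ℕ in Filter.atTop,
      ‖((n : ℝ))⁻¹ * Real.log (∑' i : Fin n → ℕ+,
        ∏ k ∈ Finset.range n, (gaussMap^[k] (cfVal (perExt n i))) ^ 2)‖
        ≤ ((n:ℝ))⁻¹ * Real.log 2 := by
    filter_upwards [eventually_ge_atTop 1] with n hn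
    obtain ⟨h1, h2⟩ := main_bounds n hn
    set S := ∑' i : Fin n → ℕ+,
        ∏ k ∈ Finset.range n, (gaussMap^[k] (cfVal (perExt n i))) ^ 2 with hS
    have hSpos : 0 < S := lt_of_lt_of_le (by norm_num) h1
    have habs : |Real.log S| ≤ Real.log 2 := by
      rw [abs_le]
      constructor
      · have : Real.log (2⁻¹ : ℝ) ≤ Real.log S :=
          Real.log_le_log (by norm_num) h1
        rwa [Real.log_inv] at this
      · exact Real.log_le_log hSpos h2
    rw [norm_mul, Real.norm_eq_abs, Real.norm_eq_abs, abs_inv, Nat.abs_cast]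
    apply mul_le_mul_of_nonneg_left habs (by positivity)
  have ht : Filter.Tendsto (fun n : ℕ => ((n:ℝ))⁻¹ * Real.log 2) Filter.atTop (nhds 0) := by
    have h := tendsto_inv_atTop_nhds_zero_nat.mul_const (Real.log 2)
    simpa using h
  exact squeeze_zero_norm' hb ht
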